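/- Let ρ₁, σ₁ and ρ₂, σ₂ be density operators and suppose there exists a test Q with 0 ≤ Q ≤ I, Tr((I−Q)ρ₁) ≤ ε_ρ, and Tr(Qσ₁) ≤ ε_σ (i.e., β_{ε_ρ}(ρ₁‖σ₁) ≤ ε_σ). Then there exists a quantum channel E with T(E(ρ₁), ρ₂) ≤ ε_ρ and T(E(σ₁), σ₂) ≤ ε_σ, for every choice of target states ρ₂, σ₂. -/

import Mathlib

open Matrix Filter
open scoped Matrix ComplexOrder

variable {n : Type*} [Fintype n] [DecidableEq n]

/-- `ρ` is a density operator: positive semidefinite with unit trace. -/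
def IsDensity (ρ : Matrix n n ℂ) : Prop := ρ.PosSemidef ∧ ρ.trace = 1

/-- Optimal type-II error `β_x(ρ‖σ)` in binary quantum hypothesis testing:
the minimum of `Tr(σQ)` over tests `0 ≤ Q ≤ 1` with `Tr(ρQ) ≥ 1 − x`. -/
noncomputable def betaErr (x : ℝ) (ρ σ : Matrix n n ℂ) : ℝ :=
  sInf {v : ℝ | ∃ Q : Matrix n n ℂ, Q.PosSemidef ∧ (1 - Q).PosSemidef ∧
    1 - x ≤ ((ρ * Q).trace).re ∧ v = ((σ * Q).trace).re}

open Classical in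
/-- Real power of a Hermitian matrix via the spectral decomposition. -/
noncomputable def hrpow (A : Matrix n n ℂ) (α : ℝ) : Matrix n n ℂ :=
  if h : A.IsHermitian then
    (h.eigenvectorUnitary : Matrix n n ℂ) *
      Matrix.diagonal (fun i => ((h.eigenvalues i ^ α : ℝ) : ℂ)) *
      star (h.eigenvectorUnitary : Matrix n n ℂ)
  else A

open Classical in
/-- Minimal eigenvalue of a Hermitian matrix. -/
noncomputable def lamMin (A : Matrix n n ℂ) : ℝ :=
  if h : A.IsHermitian then ⨅ i, h.eigenvalues i else 0

open Classical in
/-- Maximal eigenvalue of a Hermitian matrix. -/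
noncomputable def lamMax (A : Matrix n n ℂ) : ℝ :=
  if h : A.IsHermitian then ⨆ i, h.eigenvalues i else 0

open Classical in
/-- Pinching map `P_σ(X)` with respect to the eigenspaces of `σ`:
in the eigenbasis of `σ`, off-diagonal blocks between distinct eigenvalues are erased. -/
noncomputable def pinch (σ X : Matrix n n ℂ) : Matrix n n ℂ :=
  if h : σ.IsHermitian then
    (h.eigenvectorUnitary : Matrix n n ℂ) *
      (Matrix.of fun i j =>
        if h.eigenvalues i = h.eigenvalues j then
          (star (h.eigenvectorUnitary : Matrix n n ℂ) * X *
            (h.eigenvectorUnitary : Matrix n n ℂ)) i j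
        else 0) *
      star (h.eigenvectorUnitary : Matrix n n ℂ)
  else X

/-- Trace distance `T(A,B) = (1/2)‖A − B‖₁`. -/
noncomputable def traceDist (A B : Matrix n n ℂ) : ℝ :=
  (1 / 2) * ((((Matrix.posSemidef_conjTranspose_mul_self (A - B)).1.eigenvectorUnitary :
      Matrix n n ℂ) *
    Matrix.diagonal (((↑) : ℝ → ℂ) ∘ (Real.sqrt ·) ∘
      (Matrix.posSemidef_conjTranspose_mul_self (A - B)).1.eigenvalues) *
    (star (Matrix.posSemidef_conjTranspose_mul_self (A - B)).1.eigenvectorUnitary :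
      Matrix n n ℂ)).trace).re

/-- `n`-fold tensor (Kronecker) power of a matrix. -/
noncomputable def tensorPow {d : ℕ} (ρ : Matrix (Fin d) (Fin d) ℂ) (m : ℕ) :
    Matrix (Fin m → Fin d) (Fin m → Fin d) ℂ :=
  fun f g => ∏ i, ρ (f i) (g i)

/-- A quantum channel from a `d₁`- to a `d₂`-dimensional system, presented by
Kraus operators (equivalently, a completely positive trace-preserving map). -/
structure QChannel (d₁ d₂ : ℕ) where
  k : ℕ
  K : Fin k → Matrix (Fin d₂) (Fin d₁) ℂ
  tp : ∑ i, (K i)ᴴ * K i = 1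

/-- Action of a quantum channel on a matrix. -/
noncomputable def QChannel.apply {d₁ d₂ : ℕ} (E : QChannel d₁ d₂)
    (X : Matrix (Fin d₁) (Fin d₁) ℂ) : Matrix (Fin d₂) (Fin d₂) ℂ :=
  ∑ i, E.K i * X * (E.K i)ᴴ

/-- Classical Rényi relative entropy of a (commuting) pair of matrices,
`D_α(A‖B) = (1/(α−1)) ln Tr(A^α B^{1−α})`. -/
noncomputable def renyiDiv (α : ℝ) (A B : Matrix n n ℂ) : ℝ :=
  (α - 1)⁻¹ * Real.log (((hrpow A α * hrpow B (1 - α)).trace).re)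

/-- Minimal (sandwiched) Rényi relative entropy, `α ≤ 1/2` branch:
`D̃_α(ρ‖σ) = (1/(α−1)) ln Tr((√σ ρ^{α/(1−α)} √σ)^{1−α})`. -/
noncomputable def minRenyiDiv (α : ℝ) (ρ σ : Matrix n n ℂ) : ℝ :=
  (α - 1)⁻¹ * Real.log
    (((hrpow (hrpow σ (1 / 2) * hrpow ρ (α / (1 - α)) * hrpow σ (1 / 2)) (1 - α)).trace).re)


section Aux
set_option linter.unusedSectionVars false
variable {m p q r β : Type*} [Fintype p] [DecidableEq p]
  [Fintype q] [DecidableEq q] [DecidableEq m] [DecidableEq r] [Fintype β] [DecidableEq β]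

noncomputable def Matrix.PosSemidef.sqrt {A : Matrix n n ℂ} (hA : A.PosSemidef) : Matrix n n ℂ :=
  hA.1.cfc Real.sqrt

open scoped MatrixOrder in
lemma psdSqrt_eq {A : Matrix n n ℂ} (hA : A.PosSemidef) : hA.sqrt = CFC.sqrt A := by
  have h0 : 0 ≤ A := Matrix.nonneg_iff_posSemidef.mpr hA
  rw [CFC.sqrt_eq_real_sqrt A h0, cfcₙ_eq_cfc (hf0 := by simp), hA.1.cfc_eq]
  rfl

open scoped MatrixOrder in
lemma Matrix.PosSemidef.sqrt_mul_self {A : Matrix n n ℂ} (hA : A.PosSemidef) :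
    hA.sqrt * hA.sqrt = A := by
  rw [psdSqrt_eq]
  exact CFC.sqrt_mul_sqrt_self A (Matrix.nonneg_iff_posSemidef.mpr hA)

open scoped MatrixOrder in
lemma Matrix.PosSemidef.posSemidef_sqrt {A : Matrix n n ℂ} (hA : A.PosSemidef) :
    hA.sqrt.PosSemidef := by
  rw [psdSqrt_eq]
  exact Matrix.nonneg_iff_posSemidef.mp (CFC.sqrt_nonneg A)

open scoped MatrixOrder in
lemma Matrix.PosSemidef.eq_sqrt_of_sq_eq {A B : Matrix n n ℂ} (hB : B.PosSemidef)
    (hA : A.PosSemidef) (h : B ^ 2 = A) : B = hA.sqrt := by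
  rw [psdSqrt_eq, ← h, CFC.sqrt_sq B (Matrix.nonneg_iff_posSemidef.mpr hB)]

lemma traceDist_eq_sqrt (A B : Matrix n n ℂ) :
    traceDist A B = (1 / 2) * (((Matrix.posSemidef_conjTranspose_mul_self (A - B)).sqrt).trace).re := by
  rfl

lemma psd_diag_nonneg {M : Matrix n n ℂ} (hM : M.PosSemidef) (i : n) :
    0 ≤ (M i i).re ∧ (M i i).im = 0 := by
  have h := hM.diag_nonneg (i := i)
  rw [Complex.le_def] at h
  exact ⟨h.1, h.2.symm⟩

lemma psd_trace_real {M : Matrix n n ℂ} (hM : M.PosSemidef) :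
    M.trace = (M.trace.re : ℂ) ∧ 0 ≤ M.trace.re := by
  constructor
  · rw [Complex.ext_iff]
    simp only [Complex.ofReal_re, Complex.ofReal_im, and_true, true_and]
    show (∑ i, M i i).im = 0
    rw [Complex.im_sum]
    exact Finset.sum_eq_zero fun i _ => (psd_diag_nonneg hM i).2
  · show 0 ≤ (∑ i, M i i).re
    rw [Complex.re_sum]
    exact Finset.sum_nonneg fun i _ => (psd_diag_nonneg hM i).1

lemma psd_mul_trace {A B : Matrix n n ℂ} (hA : A.PosSemidef) (hB : B.PosSemidef) :
    (A * B).trace = (((A * B).trace).re : ℂ) ∧ 0 ≤ ((A * B).trace).re := by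
  set R := hA.sqrt with hR
  have hRR : R * R = A := hA.sqrt_mul_self
  have hherm : R.conjTranspose = R := hA.posSemidef_sqrt.1
  have hcy : (A * B).trace = (R * B * Rᴴ).trace := by
    rw [hherm, ← hRR, Matrix.mul_assoc, Matrix.trace_mul_comm]
  have hpsd : (R * B * Rᴴ).PosSemidef := hB.mul_mul_conjTranspose_same R
  rw [hcy]; exact psd_trace_real hpsd

lemma std_collapse (A : Matrix p q ℂ) (i : m) (j : p) (k : q) (l : r) :
    Matrix.single i j (1:ℂ) * A * Matrix.single k l (1:ℂ) = A j k • Matrix.single i l (1:ℂ) := by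
  ext x y
  simp [Matrix.mul_apply, Matrix.single, ite_and, Finset.sum_ite_eq,
    Finset.sum_ite_eq', mul_comm]
  split_ifs <;> simp

lemma std_conjT (i : m) (j : p) :
    (Matrix.single i j (1:ℂ))ᴴ = Matrix.single j i 1 := by
  ext x y
  simp [Matrix.conjTranspose_apply, Matrix.single, and_comm]

lemma sum_std_diag : ∑ j : n, Matrix.single j j (1:ℂ) = 1 := by
  ext x y
  simp only [Matrix.sum_apply, Matrix.single, Matrix.of_apply, Matrix.one_apply]
  by_cases h : x = y
  · subst h; rw [Finset.sum_eq_single x] <;> simp +contextual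
  · rw [if_neg h]
    refine Finset.sum_eq_zero fun i _ => ?_
    rw [if_neg]
    rintro ⟨rfl, rfl⟩; exact h rfl

lemma fam_tp (R : Matrix β β ℂ) (M : Matrix n n ℂ) (hR : Rᴴ = R) (hM : Mᴴ = M) :
    ∑ a : β, ∑ j : n, ((R * Matrix.single a j (1:ℂ) * M)ᴴ * (R * Matrix.single a j (1:ℂ) * M))
      = (R * R).trace • (M * M) := by
  have step : ∀ (a : β) (j : n),
      (R * Matrix.single a j (1:ℂ) * M)ᴴ * (R * Matrix.single a j (1:ℂ) * M)
        = (R * R) a a • (M * Matrix.single j j (1:ℂ) * M) := by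
    intro a j
    have h1 : (R * Matrix.single a j (1:ℂ) * M)ᴴ * (R * Matrix.single a j (1:ℂ) * M)
        = M * (Matrix.single j a (1:ℂ) * (R * R) * Matrix.single a j (1:ℂ)) * M := by
      rw [conjTranspose_mul, conjTranspose_mul, hR, hM, std_conjT]
      simp only [Matrix.mul_assoc]
    rw [h1, std_collapse, Matrix.mul_smul, Matrix.smul_mul]
  simp only [step]
  rw [Finset.sum_comm]
  simp only [← Finset.sum_smul]
  have h2 : (∑ a : β, (R * R) a a) = (R * R).trace := rfl
  simp only [h2]
  rw [← Finset.smul_sum]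
  congr 1
  have h3 : ∑ j : n, M * Matrix.single j j (1:ℂ) * M
      = M * (∑ j : n, Matrix.single j j (1:ℂ)) * M := by
    simp [Finset.mul_sum, Finset.sum_mul]
  rw [h3, sum_std_diag, Matrix.mul_one]

lemma fam_apply (R : Matrix β β ℂ) (M : Matrix n n ℂ) (hR : Rᴴ = R) (hM : Mᴴ = M)
    (X : Matrix n n ℂ) :
    ∑ a : β, ∑ j : n, ((R * Matrix.single a j (1:ℂ) * M) * X * (R * Matrix.single a j (1:ℂ) * M)ᴴ)
      = ((M * M) * X).trace • (R * R) := by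
  have step : ∀ (a : β) (j : n),
      (R * Matrix.single a j (1:ℂ) * M) * X * (R * Matrix.single a j (1:ℂ) * M)ᴴ
        = (M * X * M) j j • (R * Matrix.single a a (1:ℂ) * R) := by
    intro a j
    have h1 : (R * Matrix.single a j (1:ℂ) * M) * X * (R * Matrix.single a j (1:ℂ) * M)ᴴ
        = R * (Matrix.single a j (1:ℂ) * (M * X * M) * Matrix.single j a (1:ℂ)) * R := by
      rw [conjTranspose_mul, conjTranspose_mul, hR, hM, std_conjT]
      simp only [Matrix.mul_assoc]
    rw [h1, std_collapse, Matrix.mul_smul, Matrix.smul_mul]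
  simp only [step]
  simp only [← Finset.sum_smul]
  have h2 : (∑ j : n, (M * X * M) j j) = (M * X * M).trace := rfl
  simp only [h2]
  have h4 : (M * X * M).trace = ((M * M) * X).trace := by
    rw [Matrix.trace_mul_cycle]
  simp only [h4]
  rw [← Finset.smul_sum]
  congr 1
  have h3 : ∑ a : β, R * Matrix.single a a (1:ℂ) * R
      = R * (∑ a : β, Matrix.single a a (1:ℂ)) * R := by
    simp [Finset.mul_sum, Finset.sum_mul]
  rw [h3, sum_std_diag, Matrix.mul_one]

lemma traceDist_key {ρ σ : Matrix n n ℂ} (hρ : ρ.PosSemidef) (hσ : σ.PosSemidef)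
    {c : ℝ} (hc : 0 ≤ c) {A B : Matrix n n ℂ} (hAB : A - B = (c : ℂ) • (σ - ρ)) :
    traceDist A B ≤ c * ((ρ.trace.re + σ.trace.re) / 2) := by
  have hD : (σ - ρ).IsHermitian := hσ.1.sub hρ.1
  set U : Matrix n n ℂ := (hD.eigenvectorUnitary : Matrix n n ℂ) with hU
  set lam := hD.eigenvalues with hlam
  have hmem := Unitary.mem_iff.mp hD.eigenvectorUnitary.2
  have hUU : star U * U = 1 := hmem.1
  have hUU' : U * star U = 1 := hmem.2
  set S : Matrix n n ℂ := U * Matrix.diagonal (fun i => ((c * |lam i| : ℝ) : ℂ)) * star U with hS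
  -- S is PSD
  have hdiagpsd : (Matrix.diagonal (fun i => ((c * |lam i| : ℝ) : ℂ))).PosSemidef := by
    refine Matrix.PosSemidef.diagonal fun i => ?_
    simp only [Pi.zero_apply]
    rw [Complex.zero_le_real]
    positivity
  have cancel : ∀ X : Matrix n n ℂ, star U * (U * X) = X := fun X => by
    rw [← Matrix.mul_assoc, hUU, Matrix.one_mul]
  have cancel' : ∀ X : Matrix n n ℂ, U * (star U * X) = X := fun X => by
    rw [← Matrix.mul_assoc, hUU', Matrix.one_mul]
  have hSpsd : S.PosSemidef := by
    rw [hS, Matrix.star_eq_conjTranspose]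
    exact hdiagpsd.mul_mul_conjTranspose_same U
  -- spectral
  have hspec := hD.spectral_theorem
  rw [Unitary.conjStarAlgAut_apply] at hspec
  rw [← hU, ← hlam] at hspec
  have hDD : (σ - ρ) * (σ - ρ)
      = U * Matrix.diagonal (fun i => ((lam i : ℝ) : ℂ) * ((lam i : ℝ) : ℂ)) * star U := by
    conv_lhs => rw [hspec]
    simp only [Matrix.mul_assoc, cancel]
    rw [show Matrix.diagonal (RCLike.ofReal ∘ lam) *
        (Matrix.diagonal (RCLike.ofReal ∘ lam) * star U)
      = Matrix.diagonal (fun i => ((lam i : ℝ) : ℂ) * ((lam i : ℝ) : ℂ)) * star U by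
        rw [← Matrix.mul_assoc, Matrix.diagonal_mul_diagonal]; rfl]
  have hSsq : S ^ 2 = (A - B)ᴴ * (A - B) := by
    have hABh : (A - B)ᴴ = (c : ℂ) • (σ - ρ) := by
      rw [hAB, Matrix.conjTranspose_smul, hD.eq]
      simp [Complex.conj_ofReal]
    have key : Matrix.diagonal (fun i => ((c * |lam i| : ℝ) : ℂ)) *
        Matrix.diagonal (fun i => ((c * |lam i| : ℝ) : ℂ))
      = ((c : ℂ) * (c : ℂ)) • Matrix.diagonal (fun i => ((lam i : ℝ) : ℂ) * ((lam i : ℝ) : ℂ)) := by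
      have hfun : (fun i => ((c * |lam i| : ℝ) : ℂ) * ((c * |lam i| : ℝ) : ℂ))
          = ((c : ℂ) * (c : ℂ)) • fun i => ((lam i : ℝ) : ℂ) * ((lam i : ℝ) : ℂ) := by
        funext i
        show ((c * |lam i| : ℝ) : ℂ) * ((c * |lam i| : ℝ) : ℂ)
          = ((c : ℂ) * (c : ℂ)) * (((lam i : ℝ) : ℂ) * ((lam i : ℝ) : ℂ))
        have hr : (c * |lam i|) * (c * |lam i|) = (c * c) * (lam i * lam i) := by
          rw [show (c * |lam i|) * (c * |lam i|) = (c * c) * (|lam i| * |lam i|) by ring,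
            abs_mul_abs_self]
        rw [← Complex.ofReal_mul, hr]
        push_cast
        ring
      rw [Matrix.diagonal_mul_diagonal, hfun, Matrix.diagonal_smul]
    rw [pow_two, hABh, hAB, Matrix.smul_mul, Matrix.mul_smul, smul_smul, hDD, hS]
    simp only [Matrix.mul_assoc, cancel]
    rw [show Matrix.diagonal (fun i => ((c * |lam i| : ℝ) : ℂ)) *
        (Matrix.diagonal (fun i => ((c * |lam i| : ℝ) : ℂ)) * star U)
      = ((c : ℂ) * (c : ℂ)) • (Matrix.diagonal (fun i => ((lam i : ℝ) : ℂ) * ((lam i : ℝ) : ℂ)) * star U) by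
        rw [← Matrix.mul_assoc, key, Matrix.smul_mul]]
    rw [Matrix.mul_smul]
  have hsqrt : (Matrix.posSemidef_conjTranspose_mul_self (A - B)).sqrt = S :=
    (hSpsd.eq_sqrt_of_sq_eq _ hSsq).symm
  -- trace of S
  have htrS : S.trace = ∑ i, ((c * |lam i| : ℝ) : ℂ) := by
    rw [hS, Matrix.trace_mul_cycle, hUU, Matrix.one_mul, Matrix.trace_diagonal]
  -- eigenvalue bound
  have hdiageq : star U * (σ - ρ) * U = Matrix.diagonal (RCLike.ofReal ∘ lam) := by
    conv_lhs => rw [hspec]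
    simp only [Matrix.mul_assoc, cancel, hUU, Matrix.mul_one]
  have hconjρ : (star U * ρ * U).PosSemidef := by
    have := hρ.conjTranspose_mul_mul_same U
    rwa [Matrix.star_eq_conjTranspose]
  have hconjσ : (star U * σ * U).PosSemidef := by
    have := hσ.conjTranspose_mul_mul_same U
    rwa [Matrix.star_eq_conjTranspose]
  have hlam_eq : ∀ i, lam i = ((star U * σ * U) i i).re - ((star U * ρ * U) i i).re := by
    intro i
    have h1 : star U * (σ - ρ) * U = star U * σ * U - star U * ρ * U := by
      rw [Matrix.mul_sub, Matrix.sub_mul]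
    have h2 : ((lam i : ℝ) : ℂ) = (star U * σ * U) i i - (star U * ρ * U) i i := by
      calc ((lam i : ℝ) : ℂ) = Matrix.diagonal (RCLike.ofReal ∘ lam) i i := by
            rw [Matrix.diagonal_apply_eq]; rfl
        _ = (star U * (σ - ρ) * U) i i := by rw [hdiageq]
        _ = (star U * σ * U) i i - (star U * ρ * U) i i := by
            rw [h1]; simp [Matrix.sub_apply]
    have := congrArg Complex.re h2
    simpa using this
  have habs : ∀ i, |lam i| ≤ ((star U * σ * U) i i).re + ((star U * ρ * U) i i).re := by
    intro i
    have hs := (psd_diag_nonneg hconjσ i).1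
    have hr := (psd_diag_nonneg hconjρ i).1
    rw [hlam_eq i]
    rw [abs_le]
    constructor <;> linarith
  -- sum of diagonals equal traces
  have htrσ : ∑ i, ((star U * σ * U) i i).re = σ.trace.re := by
    have : (star U * σ * U).trace = σ.trace := by
      rw [Matrix.trace_mul_cycle, hUU', Matrix.one_mul]
    calc ∑ i, ((star U * σ * U) i i).re = ((star U * σ * U).trace).re := by
          rw [Matrix.trace]; rw [Complex.re_sum]; rfl
      _ = σ.trace.re := by rw [this]
  have htrρ : ∑ i, ((star U * ρ * U) i i).re = ρ.trace.re := by
    have : (star U * ρ * U).trace = ρ.trace := by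
      rw [Matrix.trace_mul_cycle, hUU', Matrix.one_mul]
    calc ∑ i, ((star U * ρ * U) i i).re = ((star U * ρ * U).trace).re := by
          rw [Matrix.trace]; rw [Complex.re_sum]; rfl
      _ = ρ.trace.re := by rw [this]
  have hsum : ∑ i, |lam i| ≤ ρ.trace.re + σ.trace.re := by
    calc ∑ i, |lam i| ≤ ∑ i, (((star U * σ * U) i i).re + ((star U * ρ * U) i i).re) :=
          Finset.sum_le_sum fun i _ => habs i
      _ = ρ.trace.re + σ.trace.re := by rw [Finset.sum_add_distrib, htrσ, htrρ]; ring
  -- conclude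
  rw [traceDist_eq_sqrt, hsqrt, htrS]
  have : (∑ i, ((c * |lam i| : ℝ) : ℂ)).re = c * ∑ i, |lam i| := by
    rw [Complex.re_sum, Finset.mul_sum]
    exact Finset.sum_congr rfl fun i _ => by simp
  rw [this]
  have h0 : c * ∑ i, |lam i| ≤ c * (ρ.trace.re + σ.trace.re) := by
    exact mul_le_mul_of_nonneg_left hsum hc
  nlinarith [h0]

end Aux

/-- Breakdown of the Blackwell ordering: if there is a test `Q` with
`Tr((1−Q)ρ₁) ≤ ε_ρ` and `Tr(Qσ₁) ≤ ε_σ`, then for every choice of target states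
there exists a quantum channel `E` with `T(E(ρ₁),ρ₂) ≤ ε_ρ` and `T(E(σ₁),σ₂) ≤ ε_σ`. -/
theorem channel_of_test {d₁ d₂ : ℕ} (ρ₁ σ₁ : Matrix (Fin d₁) (Fin d₁) ℂ)
    (hρ₁ : IsDensity ρ₁) (hσ₁ : IsDensity σ₁) (ε_ρ ε_σ : ℝ)
    (Q : Matrix (Fin d₁) (Fin d₁) ℂ) (hQ : Q.PosSemidef) (hQ1 : (1 - Q).PosSemidef)
    (h1 : (((1 - Q) * ρ₁).trace).re ≤ ε_ρ) (h2 : ((Q * σ₁).trace).re ≤ ε_σ)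
    (ρ₂ σ₂ : Matrix (Fin d₂) (Fin d₂) ℂ) (hρ₂ : IsDensity ρ₂) (hσ₂ : IsDensity σ₂) :
    ∃ E : QChannel d₁ d₂,
      traceDist (E.apply ρ₁) ρ₂ ≤ ε_ρ ∧ traceDist (E.apply σ₁) σ₂ ≤ ε_σ := by
  classical
  -- square roots
  set R : Matrix (Fin d₂) (Fin d₂) ℂ := hρ₂.1.sqrt with hRdef
  set Sm : Matrix (Fin d₂) (Fin d₂) ℂ := hσ₂.1.sqrt with hSmdef
  set M : Matrix (Fin d₁) (Fin d₁) ℂ := hQ.sqrt with hMdef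
  set N : Matrix (Fin d₁) (Fin d₁) ℂ := hQ1.sqrt with hNdef
  have hR : Rᴴ = R := hρ₂.1.posSemidef_sqrt.1
  have hSh : Smᴴ = Sm := hσ₂.1.posSemidef_sqrt.1
  have hM : Mᴴ = M := hQ.posSemidef_sqrt.1
  have hN : Nᴴ = N := hQ1.posSemidef_sqrt.1
  have hRR : R * R = ρ₂ := hρ₂.1.sqrt_mul_self
  have hSS : Sm * Sm = σ₂ := hσ₂.1.sqrt_mul_self
  have hMM : M * M = Q := hQ.sqrt_mul_self
  have hNN : N * N = 1 - Q := hQ1.sqrt_mul_self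
  -- Kraus family
  set F : (Fin d₂ × Fin d₁) ⊕ (Fin d₂ × Fin d₁) → Matrix (Fin d₂) (Fin d₁) ℂ :=
    Sum.elim (fun p => R * Matrix.single p.1 p.2 (1:ℂ) * M)
      (fun p => Sm * Matrix.single p.1 p.2 (1:ℂ) * N) with hF
  set e := Fintype.equivFin ((Fin d₂ × Fin d₁) ⊕ (Fin d₂ × Fin d₁)) with he
  have htp : ∑ i, (F (e.symm i))ᴴ * F (e.symm i) = 1 := by
    rw [Equiv.sum_comp e.symm (fun x => (F x)ᴴ * F x), Fintype.sum_sum_type]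
    simp only [hF, Sum.elim_inl, Sum.elim_inr]
    rw [Fintype.sum_prod_type, Fintype.sum_prod_type]
    rw [fam_tp R M hR hM, fam_tp Sm N hSh hN, hRR, hSS, hMM, hNN, hρ₂.2, hσ₂.2,
      one_smul, one_smul, add_sub_cancel]
  have happ : ∀ X : Matrix (Fin d₁) (Fin d₁) ℂ,
      (QChannel.apply ⟨_, fun i => F (e.symm i), htp⟩ X)
        = (Q * X).trace • ρ₂ + ((1 - Q) * X).trace • σ₂ := by
    intro X
    show ∑ i, F (e.symm i) * X * (F (e.symm i))ᴴ = _
    rw [Equiv.sum_comp e.symm (fun x => F x * X * (F x)ᴴ), Fintype.sum_sum_type]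
    simp only [hF, Sum.elim_inl, Sum.elim_inr]
    rw [Fintype.sum_prod_type, Fintype.sum_prod_type]
    rw [fam_apply R M hR hM X, fam_apply Sm N hSh hN X, hRR, hSS, hMM, hNN]
  refine ⟨⟨_, fun i => F (e.symm i), htp⟩, ?_, ?_⟩
  · -- ρ bound
    have hc := psd_mul_trace hQ1 hρ₁.1
    set c : ℝ := (((1 - Q) * ρ₁).trace).re with hcdef
    have hQρ : (Q * ρ₁).trace = 1 - (c : ℂ) := by
      have hsplit : (Q * ρ₁).trace + ((1 - Q) * ρ₁).trace = 1 := by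
        rw [← Matrix.trace_add, ← Matrix.add_mul]
        simp [hρ₁.2]
      rw [← hc.1]; linear_combination hsplit
    have hdiff : QChannel.apply ⟨_, fun i => F (e.symm i), htp⟩ ρ₁ - ρ₂
        = (c : ℂ) • (σ₂ - ρ₂) := by
      rw [happ ρ₁, hQρ, ← hc.1]
      module
    have := traceDist_key hρ₂.1 hσ₂.1 hc.2 hdiff
    rw [hρ₂.2, hσ₂.2] at this
    simpa using le_trans this (by simpa using h1)
  · -- σ bound
    have hs := psd_mul_trace hQ hσ₁.1
    set s : ℝ := ((Q * σ₁).trace).re with hsdef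
    have hQσ : ((1 - Q) * σ₁).trace = 1 - (s : ℂ) := by
      have hsplit : (Q * σ₁).trace + ((1 - Q) * σ₁).trace = 1 := by
        rw [← Matrix.trace_add, ← Matrix.add_mul]
        simp [hσ₁.2]
      rw [← hs.1]; linear_combination hsplit
    have hdiff : QChannel.apply ⟨_, fun i => F (e.symm i), htp⟩ σ₁ - σ₂
        = (s : ℂ) • (ρ₂ - σ₂) := by
      rw [happ σ₁, hQσ, ← hs.1]
      module
    have := traceDist_key hσ₂.1 hρ₂.1 hs.2 hdiff
    rw [hρ₂.2, hσ₂.2] at this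
    simpa using le_trans this (by simpa using h2)
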